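/- Let n ≥ 3, let e₁,…,eₙ be the standard basis of ℝⁿ, and let γ₁, γ₂, γ₃ be real numbers satisfying the non-flatness condition (Γ). Define Π₁ = span(e₁,…,e_{n−1}), Π₂ = span(e₁,…,e_{n−2}, e_{n−1}+γ₁eₙ), Π₃ = span(e₁,…,e_{n−3}, e_{n−2}+γ₃eₙ, e_{n−1}+γ₂eₙ). Let σ₁, σ₂ be n×n real symmetric positive definite matrices and set gᵢ = (det σᵢ)^{1/(n−2)} · σᵢ⁻¹ for i = 1, 2. If ⟨g₁u, v⟩ = ⟨g₂u, v⟩ for all u, v ∈ Πₖ and each k = 1, 2, 3, then σ₁ = σ₂. -/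

import Mathlib

open Matrix

private lemma aux_entry {n : ℕ} (A : Matrix (Fin n) (Fin n) ℝ) (i j : Fin n) :
    (A *ᵥ (Pi.single i 1 : Fin n → ℝ)) ⬝ᵥ (Pi.single j 1 : Fin n → ℝ) = A j i := by
  simp [Matrix.mulVec_single]

private lemma aux_expand1 {n : ℕ} (A : Matrix (Fin n) (Fin n) ℝ) (i k l : Fin n) (β : ℝ) :
    (A *ᵥ (Pi.single i 1 : Fin n → ℝ)) ⬝ᵥ
      ((Pi.single k 1 : Fin n → ℝ) + β • (Pi.single l 1 : Fin n → ℝ))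
      = A k i + β * A l i := by
  simp [dotProduct_add, dotProduct_smul, Matrix.mulVec_single]

private lemma aux_expand2 {n : ℕ} (A : Matrix (Fin n) (Fin n) ℝ) (i j k l : Fin n) (α β : ℝ) :
    (A *ᵥ ((Pi.single i 1 : Fin n → ℝ) + α • (Pi.single j 1 : Fin n → ℝ))) ⬝ᵥ
      ((Pi.single k 1 : Fin n → ℝ) + β • (Pi.single l 1 : Fin n → ℝ))
      = A k i + β * A l i + α * A k j + α * β * A l j := by
  simp [Matrix.mulVec_add, Matrix.mulVec_smul, add_dotProduct, smul_dotProduct,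
    dotProduct_add, dotProduct_smul, Matrix.mulVec_single]
  ring

/-- Let `n ≥ 3` and `γ₁, γ₂, γ₃` satisfy the non-flatness condition (Γ).
If `σ₁, σ₂` are symmetric positive definite and the metrics `gᵢ = (det σᵢ)^(1/(n-2)) • σᵢ⁻¹`
have equal tangential components on the three tangent planes `Π₁, Π₂, Π₃`, then `σ₁ = σ₂`. -/
theorem conductivity_determined_by_tangential_metric (n : ℕ) (hn : 3 ≤ n)
    (γ₁ γ₂ γ₃ : ℝ)
    (hΓ : (γ₁ ≠ 0 ∧ γ₃ ≠ 0) ∨ (γ₁ ≠ 0 ∧ γ₃ = 0 ∧ γ₂ ≠ 0 ∧ γ₁ ≠ γ₂))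
    (σ₁ σ₂ : Matrix (Fin n) (Fin n) ℝ)
    (hσ₁ : σ₁.IsSymm) (hσ₁pd : σ₁.PosDef) (hσ₂ : σ₂.IsSymm) (hσ₂pd : σ₂.PosDef)
    (g₁ g₂ : Matrix (Fin n) (Fin n) ℝ)
    (hg₁ : g₁ = (σ₁.det ^ ((1 : ℝ) / ((n : ℝ) - 2))) • σ₁⁻¹)
    (hg₂ : g₂ = (σ₂.det ^ ((1 : ℝ) / ((n : ℝ) - 2))) • σ₂⁻¹)
    (P₁ P₂ P₃ : Submodule ℝ (Fin n → ℝ))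
    (hP₁ : P₁ = Submodule.span ℝ
      {v | ∃ i : Fin n, (i : ℕ) < n - 1 ∧ v = Pi.single i 1})
    (hP₂ : P₂ = Submodule.span ℝ
      ({v | ∃ i : Fin n, (i : ℕ) < n - 2 ∧ v = Pi.single i 1} ∪
        {(Pi.single (⟨n - 2, by omega⟩ : Fin n) 1 : Fin n → ℝ)
          + γ₁ • (Pi.single (⟨n - 1, by omega⟩ : Fin n) 1 : Fin n → ℝ)}))
    (hP₃ : P₃ = Submodule.span ℝ
      ({v | ∃ i : Fin n, (i : ℕ) < n - 3 ∧ v = Pi.single i 1} ∪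
        {(Pi.single (⟨n - 3, by omega⟩ : Fin n) 1 : Fin n → ℝ)
          + γ₃ • (Pi.single (⟨n - 1, by omega⟩ : Fin n) 1 : Fin n → ℝ),
         (Pi.single (⟨n - 2, by omega⟩ : Fin n) 1 : Fin n → ℝ)
          + γ₂ • (Pi.single (⟨n - 1, by omega⟩ : Fin n) 1 : Fin n → ℝ)}))
    (h1 : ∀ u ∈ P₁, ∀ v ∈ P₁, (g₁ *ᵥ u) ⬝ᵥ v = (g₂ *ᵥ u) ⬝ᵥ v)
    (h2 : ∀ u ∈ P₂, ∀ v ∈ P₂, (g₁ *ᵥ u) ⬝ᵥ v = (g₂ *ᵥ u) ⬝ᵥ v)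
    (h3 : ∀ u ∈ P₃, ∀ v ∈ P₃, (g₁ *ᵥ u) ⬝ᵥ v = (g₂ *ᵥ u) ⬝ᵥ v) :
    σ₁ = σ₂ := by
  have hσ₁det : 0 < σ₁.det := hσ₁pd.det_pos
  have hσ₂det : 0 < σ₂.det := hσ₂pd.det_pos
  have hγ₁ : γ₁ ≠ 0 := by rcases hΓ with ⟨h, -⟩ | ⟨h, -⟩ <;> exact h
  set D : Matrix (Fin n) (Fin n) ℝ := g₁ - g₂ with hD
  -- symmetry of D
  have hDs : ∀ i j : Fin n, D i j = D j i := by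
    have hs1 : g₁ᵀ = g₁ := by
      rw [hg₁, Matrix.transpose_smul, Matrix.transpose_nonsing_inv, hσ₁.eq]
    have hs2 : g₂ᵀ = g₂ := by
      rw [hg₂, Matrix.transpose_smul, Matrix.transpose_nonsing_inv, hσ₂.eq]
    have hs : Dᵀ = D := by rw [hD, Matrix.transpose_sub, hs1, hs2]
    intro i j
    have := congrFun (congrFun hs j) i
    simpa [Matrix.transpose_apply] using this
  -- the orthogonality hypotheses in subtracted form
  have hD1 : ∀ u ∈ P₁, ∀ v ∈ P₁, (D *ᵥ u) ⬝ᵥ v = 0 := by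
    intro u hu v hv
    simp [hD, Matrix.sub_mulVec, sub_dotProduct, h1 u hu v hv]
  have hD2 : ∀ u ∈ P₂, ∀ v ∈ P₂, (D *ᵥ u) ⬝ᵥ v = 0 := by
    intro u hu v hv
    simp [hD, Matrix.sub_mulVec, sub_dotProduct, h2 u hu v hv]
  have hD3 : ∀ u ∈ P₃, ∀ v ∈ P₃, (D *ᵥ u) ⬝ᵥ v = 0 := by
    intro u hu v hv
    simp [hD, Matrix.sub_mulVec, sub_dotProduct, h3 u hu v hv]
  -- memberships
  have mem1 : ∀ i : Fin n, (i : ℕ) < n - 1 → (Pi.single i 1 : Fin n → ℝ) ∈ P₁ := by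
    intro i hi; rw [hP₁]; exact Submodule.subset_span ⟨i, hi, rfl⟩
  have mem2 : ∀ i : Fin n, (i : ℕ) < n - 2 → (Pi.single i 1 : Fin n → ℝ) ∈ P₂ := by
    intro i hi; rw [hP₂]; exact Submodule.subset_span (Or.inl ⟨i, hi, rfl⟩)
  have memw : ((Pi.single (⟨n - 2, by omega⟩ : Fin n) 1 : Fin n → ℝ)
      + γ₁ • (Pi.single (⟨n - 1, by omega⟩ : Fin n) 1 : Fin n → ℝ)) ∈ P₂ := by
    rw [hP₂]; exact Submodule.subset_span (Or.inr rfl)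
  have mema : ((Pi.single (⟨n - 3, by omega⟩ : Fin n) 1 : Fin n → ℝ)
      + γ₃ • (Pi.single (⟨n - 1, by omega⟩ : Fin n) 1 : Fin n → ℝ)) ∈ P₃ := by
    rw [hP₃]; exact Submodule.subset_span (Or.inr (Set.mem_insert _ _))
  have memb : ((Pi.single (⟨n - 2, by omega⟩ : Fin n) 1 : Fin n → ℝ)
      + γ₂ • (Pi.single (⟨n - 1, by omega⟩ : Fin n) 1 : Fin n → ℝ)) ∈ P₃ := by
    rw [hP₃]; exact Submodule.subset_span (Or.inr (Set.mem_insert_of_mem _ rfl))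
  -- basic vanishing
  have z1 : ∀ i j : Fin n, (i : ℕ) < n - 1 → (j : ℕ) < n - 1 → D i j = 0 := by
    intro i j hi hj
    have := hD1 _ (mem1 j hj) _ (mem1 i hi)
    rwa [aux_entry] at this
  have z2 : ∀ i : Fin n, (i : ℕ) < n - 2 → D ⟨n - 1, by omega⟩ i = 0 := by
    intro i hi
    have h := hD2 _ (mem2 i hi) _ memw
    rw [aux_expand1] at h
    have hz : D ⟨n - 2, by omega⟩ i = 0 := z1 _ _ (by simp; omega) (by omega)
    rw [hz] at h
    have := mul_eq_zero.mp (by linarith : γ₁ * D ⟨n - 1, by omega⟩ i = 0)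
    tauto
  -- the three quadratic relations
  have eq3 := hD2 _ memw _ memw
  rw [aux_expand2] at eq3
  have eq4 := hD3 _ mema _ mema
  rw [aux_expand2] at eq4
  have eq5 := hD3 _ memb _ memb
  rw [aux_expand2] at eq5
  have eq6 := hD3 _ mema _ memb
  rw [aux_expand2] at eq6
  have z122 : D ⟨n - 2, by omega⟩ ⟨n - 2, by omega⟩ = 0 := z1 _ _ (by simp; omega) (by simp; omega)
  have z133 : D ⟨n - 3, by omega⟩ ⟨n - 3, by omega⟩ = 0 := z1 _ _ (by simp; omega) (by simp; omega)
  have z123 : D ⟨n - 2, by omega⟩ ⟨n - 3, by omega⟩ = 0 := z1 _ _ (by simp; omega) (by simp; omega)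
  have z2i3 : D ⟨n - 1, by omega⟩ ⟨n - 3, by omega⟩ = 0 := z2 _ (by simp; omega)
  have E3 : 2 * γ₁ * D ⟨n - 1, by omega⟩ ⟨n - 2, by omega⟩
      + γ₁ ^ 2 * D ⟨n - 1, by omega⟩ ⟨n - 1, by omega⟩ = 0 := by
    linear_combination eq3 - z122 - γ₁ * hDs ⟨n - 2, by omega⟩ ⟨n - 1, by omega⟩
  have E4 : γ₃ ^ 2 * D ⟨n - 1, by omega⟩ ⟨n - 1, by omega⟩ = 0 := by
    linear_combination eq4 - z133 - γ₃ * z2i3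
      - γ₃ * hDs ⟨n - 3, by omega⟩ ⟨n - 1, by omega⟩ - γ₃ * z2i3
  have E5 : 2 * γ₂ * D ⟨n - 1, by omega⟩ ⟨n - 2, by omega⟩
      + γ₂ ^ 2 * D ⟨n - 1, by omega⟩ ⟨n - 1, by omega⟩ = 0 := by
    linear_combination eq5 - z122 - γ₂ * hDs ⟨n - 2, by omega⟩ ⟨n - 1, by omega⟩
  have E6 : γ₃ * D ⟨n - 1, by omega⟩ ⟨n - 2, by omega⟩
      + γ₃ * γ₂ * D ⟨n - 1, by omega⟩ ⟨n - 1, by omega⟩ = 0 := by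
    linear_combination eq6 - z123 - γ₂ * z2i3 - γ₃ * hDs ⟨n - 2, by omega⟩ ⟨n - 1, by omega⟩
  -- conclude the two remaining entries vanish
  have he : D ⟨n - 1, by omega⟩ ⟨n - 1, by omega⟩ = 0 := by
    rcases hΓ with ⟨-, hγ₃⟩ | ⟨hγ₁', hγ₃0, hγ₂, hne⟩
    · exact (mul_eq_zero.mp E4).resolve_left (pow_ne_zero 2 hγ₃)
    · have hkey : γ₁ * γ₂ * (γ₁ - γ₂) * D ⟨n - 1, by omega⟩ ⟨n - 1, by omega⟩ = 0 := by
        linear_combination γ₂ * E3 - γ₁ * E5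
      have hne' : γ₁ * γ₂ * (γ₁ - γ₂) ≠ 0 :=
        mul_ne_zero (mul_ne_zero hγ₁ hγ₂) (sub_ne_zero.mpr hne)
      exact (mul_eq_zero.mp hkey).resolve_left hne'
  have hd : D ⟨n - 1, by omega⟩ ⟨n - 2, by omega⟩ = 0 := by
    rcases hΓ with ⟨-, hγ₃⟩ | ⟨hγ₁', hγ₃0, hγ₂, hne⟩
    · have : γ₃ * D ⟨n - 1, by omega⟩ ⟨n - 2, by omega⟩ = 0 := by
        linear_combination E6 - γ₃ * γ₂ * he
      exact (mul_eq_zero.mp this).resolve_left hγ₃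
    · have : (2 * γ₁) * D ⟨n - 1, by omega⟩ ⟨n - 2, by omega⟩ = 0 := by
        linear_combination E3 - γ₁ ^ 2 * he
      exact (mul_eq_zero.mp this).resolve_left (by simpa using hγ₁)
  -- all entries of D vanish
  have hDzero : ∀ i j : Fin n, D i j = 0 := by
    have key : ∀ j : Fin n, D ⟨n - 1, by omega⟩ j = 0 := by
      intro j
      by_cases hj : (j : ℕ) < n - 2
      · exact z2 j hj
      · by_cases hj' : (j : ℕ) = n - 2
        · have : j = ⟨n - 2, by omega⟩ := Fin.ext (by simpa using hj')
          rw [this]; exact hd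
        · have : j = ⟨n - 1, by omega⟩ := Fin.ext (by have := j.isLt; simp; omega)
          rw [this]; exact he
    intro i j
    by_cases hi : (i : ℕ) < n - 1
    · by_cases hj : (j : ℕ) < n - 1
      · exact z1 i j hi hj
      · have : j = ⟨n - 1, by omega⟩ := Fin.ext (by have := j.isLt; simp; omega)
        rw [this, hDs]; exact key i
    · have : i = ⟨n - 1, by omega⟩ := Fin.ext (by have := i.isLt; simp; omega)
      rw [this]; exact key j
  have hgeq : g₁ = g₂ := by
    have hsub : g₁ - g₂ = 0 := by
      ext i j
      have := hDzero i j
      rw [hD] at this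
      simpa using this
    exact sub_eq_zero.mp hsub
  -- recover the determinants
  have hm : (0 : ℝ) < (n : ℝ) - 2 := by
    have : (3 : ℝ) ≤ (n : ℝ) := by exact_mod_cast hn
    linarith
  have hdetg : g₁.det = g₂.det := by rw [hgeq]
  rw [hg₁, hg₂, Matrix.det_smul, Matrix.det_smul, Fintype.card_fin,
    Matrix.det_nonsing_inv, Matrix.det_nonsing_inv] at hdetg
  simp only [Ring.inverse_eq_inv'] at hdetg
  have rw1 : ∀ d : ℝ, 0 < d →
      (d ^ ((1 : ℝ) / ((n : ℝ) - 2))) ^ n * d⁻¹ = d ^ ((2 : ℝ) / ((n : ℝ) - 2)) := by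
    intro d hd
    rw [← Real.rpow_natCast (d ^ ((1 : ℝ) / ((n : ℝ) - 2))) n, ← Real.rpow_mul hd.le,
      ← Real.rpow_neg_one d, ← Real.rpow_add hd]
    congr 1
    field_simp
    ring
  rw [rw1 _ hσ₁det, rw1 _ hσ₂det] at hdetg
  have hmul : (2 : ℝ) / ((n : ℝ) - 2) * (((n : ℝ) - 2) / 2) = 1 := by
    field_simp
  have hdets : σ₁.det = σ₂.det := by
    calc σ₁.det = (σ₁.det ^ ((2 : ℝ) / ((n : ℝ) - 2))) ^ (((n : ℝ) - 2) / 2) := by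
          rw [← Real.rpow_mul hσ₁det.le, hmul, Real.rpow_one]
      _ = (σ₂.det ^ ((2 : ℝ) / ((n : ℝ) - 2))) ^ (((n : ℝ) - 2) / 2) := by rw [hdetg]
      _ = σ₂.det := by rw [← Real.rpow_mul hσ₂det.le, hmul, Real.rpow_one]
  have hcne : σ₁.det ^ ((1 : ℝ) / ((n : ℝ) - 2)) ≠ 0 :=
    (Real.rpow_pos_of_pos hσ₁det _).ne'
  have hinv : σ₁⁻¹ = σ₂⁻¹ := by
    have h := hgeq
    rw [hg₁, hg₂, ← hdets] at h
    exact smul_right_injective _ hcne h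
  calc σ₁ = σ₁⁻¹⁻¹ := (Matrix.nonsing_inv_nonsing_inv σ₁ (isUnit_iff_ne_zero.mpr hσ₁det.ne')).symm
    _ = σ₂⁻¹⁻¹ := by rw [hinv]
    _ = σ₂ := Matrix.nonsing_inv_nonsing_inv σ₂ (isUnit_iff_ne_zero.mpr hσ₂det.ne')
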